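/- In the setting of the compatible decompositions D^B = H^B ⊕ im ∂^B ⊕ L^B and D^Λ = H^Λ ⊕ im ∂^Λ ⊕ L^Λ with H^Λ = F(H^B) ⊕ Ĥ and L^Λ = F(L^B) ⊕ L̂, the isomorphism i^Λ : H^Λ → Ext*_Λ(Δ,Δ) can be chosen so that the projections p^B : D^B → Ext*_B(𝕃,𝕃) and p^Λ : D^Λ → Ext*_Λ(Δ,Δ) satisfy F(p^B(f)) = p^Λ(F(f)) for all f ∈ D^B. -/

import Mathlib

noncomputable section

universe u

/-- Data of a complete set of orthogonal idempotents indexed by the vertices `Fin n`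
of a quiver, inside a `K`-algebra. -/
structure IdemData (K : Type u) [Field K] (n : ℕ) (B : Type u) [Ring B] [Algebra K B] where
  e : Fin n → B
  orth : ∀ i j, e i * e j = if i = j then e i else 0
  complete : ∑ i, e i = 1

namespace IdemData

variable {K : Type u} [Field K] {n : ℕ} {B : Type u} [Ring B] [Algebra K B]

/-- Membership in the radical of a directed algebra: all "diagonal components" vanish.
For a directed (triangular, basic) algebra this is exactly the Jacobson radical. -/
def IsRad (d : IdemData K n B) (b : B) : Prop := ∀ i, d.e i * b * d.e i = 0

/-- A directed algebra: finite dimensional, basic, whose (Gabriel) quiver is acyclic with all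
arrows `i ⟶ j` satisfying `i < j`.  Equivalently: `e j * B * e i = 0` for `j < i` and the
"diagonal" components `e i * B * e i` are one-dimensional. -/
def Directed (d : IdemData K n B) : Prop :=
  FiniteDimensional K B ∧
  (∀ i j : Fin n, j < i → ∀ b : B, d.e j * b * d.e i = 0) ∧
  (∀ i : Fin n, ∀ b : B, ∃ c : K, d.e i * b * d.e i = c • d.e i)

/-- The opposite of a directed algebra (all arrows decrease); `A^op` for `A` directed. -/
def Codirected (d : IdemData K n B) : Prop :=
  FiniteDimensional K B ∧
  (∀ i j : Fin n, i < j → ∀ b : B, d.e j * b * d.e i = 0) ∧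
  (∀ i : Fin n, ∀ b : B, ∃ c : K, d.e i * b * d.e i = c • d.e i)

/-- The indecomposable projective left module `P(i) = B·e i`, realized as the left ideal
`{x | x * e i = x}`. -/
def proj (d : IdemData K n B) (i : Fin n) : Submodule B B where
  carrier := {x | x * d.e i = x}
  add_mem' := by
    intro a b ha hb
    simp only [Set.mem_setOf_eq] at *
    rw [add_mul, ha, hb]
  zero_mem' := by simp
  smul_mem' := by
    intro c x hx
    simp only [Set.mem_setOf_eq, smul_eq_mul] at *
    rw [mul_assoc, hx]

end IdemData

/-- The bilinear "multiplication" map `C ⊗ B → Λ`, `(c, b) ↦ ιC c * ιB b`. -/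
def dualBil {K : Type u} [Field K] {B C L : Type u} [Ring B] [Algebra K B] [Ring C] [Algebra K C]
    [Ring L] [Algebra K L] (ιB : B →ₐ[K] L) (ιC : C →ₐ[K] L) : C →ₗ[K] B →ₗ[K] L :=
  LinearMap.mk₂ K (fun c b => ιC c * ιB b)
    (fun c c' b => by simp only [map_add, add_mul])
    (fun k c b => by simp only [map_smul, smul_mul_assoc])
    (fun c b b' => by simp only [map_add, mul_add])
    (fun k c b => by simp only [map_smul, mul_smul_comm])

/-- `Λ` is the dual extension algebra `𝒜(B, C)` of `B` and `C` (in the paper `C = A^op`):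
`B` and `C` embed as subalgebras, sharing the idempotents; the product of a radical element of
`B` with a radical element of `C` (in this order; i.e. all paths `α β'`) vanishes; and the
products `ιC c * ιB b` span `Λ`, the only linear relations among them being the ones forced by
`ιC (c e_i) * ιB (e_j b) = 0` for `i ≠ j`.  This encodes `Λ ≅ ⊕_i C e_i ⊗ e_i B` as in
`Definition 2.1` of the paper. -/
structure DualExt (K : Type u) [Field K] (n : ℕ) (B C L : Type u) [Ring B] [Algebra K B]
    [Ring C] [Algebra K C] [Ring L] [Algebra K L]
    (dB : IdemData K n B) (dC : IdemData K n C) where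
  ιB : B →ₐ[K] L
  ιC : C →ₐ[K] L
  injB : Function.Injective ιB
  injC : Function.Injective ιC
  idem : ∀ i, ιB (dB.e i) = ιC (dC.e i)
  radMul : ∀ b c, dB.IsRad b → dC.IsRad c → ιB b * ιC c = 0
  spans : Submodule.span K {x : L | ∃ c b, x = ιC c * ιB b} = ⊤
  mulKer : LinearMap.ker (TensorProduct.lift (dualBil ιB ιC)) =
    Submodule.span K {x : TensorProduct K C B |
      ∃ i j : Fin n, i ≠ j ∧ ∃ c b, x = (c * dC.e i) ⊗ₜ[K] (dB.e j * b)}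

/-- The left ideal `{x | x * a = x}`; for an idempotent `a = e i` this is the
indecomposable projective module `P(i) = B e i`. -/
def leftIdeal {L : Type u} [Ring L] (a : L) : Submodule L L where
  carrier := {x | x * a = x}
  add_mem' := by
    intro x y hx hy
    simp only [Set.mem_setOf_eq] at *
    rw [add_mul, hx, hy]
  zero_mem' := by simp
  smul_mem' := by
    intro c x hx
    simp only [Set.mem_setOf_eq, smul_eq_mul] at *
    rw [mul_assoc, hx]

/-- A (ℤ-graded) dg-algebra of endomorphisms of a complex: the algebra `D` (modelling
`End(P•)` of a complex of projectives, whose elements are homogeneous graded endomorphisms,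
not necessarily chain maps) with an internal grading, containing the differential of the
complex as a degree-one square-zero element `d`, and with the differential
`∂ f = d f − (−1)^{|f|} f d`. -/
structure DGA (K : Type u) [Field K] (D : Type u) [Ring D] [Algebra K D] where
  gr : ℤ → Submodule K D
  internal : DirectSum.IsInternal gr
  one_mem : (1 : D) ∈ gr 0
  mul_mem : ∀ {a b : ℤ} {x y : D}, x ∈ gr a → y ∈ gr b → x * y ∈ gr (a + b)
  d : D
  d_mem : d ∈ gr 1
  d_sq : d * d = 0
  der : D →ₗ[K] D
  der_apply : ∀ (a : ℤ) (x : D), x ∈ gr a →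
    der x = d * x - ((Int.negOnePow a : ℤ) • (x * d))

/-- Merkulov's construction (following Lu–Palmieri–Wu–Zhang; Section 6 of the paper):
a decomposition `D = H ⊕ im ∂ ⊕ L`, where `H` consists of cycles and realizes the homology
(`H ≅ Ext*`), together with the projection `p : D → H`, the homotopy `h` (zero on `H ⊕ L`,
`∂⁻¹` on `im ∂`), the inductively defined maps
`λ₂ = multiplication`, `λ_n = Σ_{r+s=n, s ≥ 1} (−1)^{s+1} λ₂(hλ_r ⊗ hλ_s)` (`hλ₁ = −id`),
and the resulting `A∞`-multiplications `m_n = p ∘ λ_n ∘ i^{⊗n}` on `H ≅ Ext*`.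
Tuples are written `(ε_n, …, ε_1)` with `v 0 = ε_1` the first map to be composed. -/
structure Merkulov (K : Type u) [Field K] (D : Type u) [Ring D] [Algebra K D]
    (E : DGA K D) where
  H : ℤ → Submodule K D
  L : ℤ → Submodule K D
  H_le : ∀ a, H a ≤ E.gr a
  L_le : ∀ a, L a ≤ E.gr a
  H_cycle : ∀ a, ∀ x ∈ H a, E.der x = 0
  L_reg : ∀ a, ∀ x ∈ L a, E.der x = 0 → x = 0
  decomp : ∀ (a : ℤ), ∀ x ∈ E.gr a,
    ∃ xh ∈ H a, ∃ y ∈ L (a - 1), ∃ xl ∈ L a, x = xh + E.der y + xl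
  indep : ∀ (a : ℤ), ∀ xh ∈ H a, ∀ y ∈ L (a - 1), ∀ xl ∈ L a,
    xh + E.der y + xl = 0 → xh = 0 ∧ E.der y = 0 ∧ xl = 0
  p : D →ₗ[K] D
  p_H : ∀ a, ∀ x ∈ H a, p x = x
  p_bdry : ∀ x : D, p (E.der x) = 0
  p_L : ∀ a, ∀ x ∈ L a, p x = 0
  h : D →ₗ[K] D
  h_H : ∀ a, ∀ x ∈ H a, h x = 0
  h_L : ∀ a, ∀ x ∈ L a, h x = 0
  h_inv : ∀ a, ∀ x ∈ L a, h (E.der x) = x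
  lam : ∀ k : ℕ, (Fin k → D) → D
  lam_two : ∀ v : Fin 2 → D, lam 2 v = v 1 * v 0
  lam_rec : ∀ k : ℕ, 3 ≤ k → ∀ v : Fin k → D, lam k v =
    ∑ s ∈ (Finset.Ioo 0 k).attach,
      ((-1 : ℤ) ^ ((s : ℕ) + 1)) •
        ((if (k - (s : ℕ)) = 1 then
            -(v ⟨(s : ℕ), by have := Finset.mem_Ioo.mp s.property; omega⟩)
          else h (lam (k - (s : ℕ)) (fun i : Fin (k - (s : ℕ)) =>
            v ⟨(s : ℕ) + (i : ℕ), by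
              have := Finset.mem_Ioo.mp s.property
              have := i.isLt
              omega⟩))) *
         (if (s : ℕ) = 1 then
            -(v ⟨0, by have := Finset.mem_Ioo.mp s.property; omega⟩)
          else h (lam (s : ℕ) (fun i : Fin (s : ℕ) =>
            v ⟨(i : ℕ), by
              have := Finset.mem_Ioo.mp s.property
              have := i.isLt
              omega⟩))))
  m : ∀ k : ℕ, (Fin k → D) → D
  m_def : ∀ (k : ℕ) (v : Fin k → D), m k v = p (lam k v)

/-- The decomposition `D = H ⊕ im ∂ ⊕ L` underlying Merkulov's construction:
`H` and `L` are graded subspaces, `H` consists of cycles (and realizes the homology of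
`(D, ∂)`, i.e. `H ≅ Ext*`), `∂` is injective on `L`, and every homogeneous element
decomposes uniquely as `(element of H) + ∂(element of L) + (element of L)`. -/
structure IsMerkDecomp {K : Type u} [Field K] {D : Type u} [Ring D] [Algebra K D]
    (E : DGA K D) (H L : ℤ → Submodule K D) : Prop where
  H_le : ∀ a, H a ≤ E.gr a
  L_le : ∀ a, L a ≤ E.gr a
  H_cycle : ∀ a, ∀ x ∈ H a, E.der x = 0
  L_reg : ∀ a, ∀ x ∈ L a, E.der x = 0 → x = 0
  decomp : ∀ (a : ℤ), ∀ x ∈ E.gr a,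
    ∃ xh ∈ H a, ∃ y ∈ L (a - 1), ∃ xl ∈ L a, x = xh + E.der y + xl
  indep : ∀ (a : ℤ), ∀ xh ∈ H a, ∀ y ∈ L (a - 1), ∀ xl ∈ L a,
    xh + E.der y + xl = 0 → xh = 0 ∧ E.der y = 0 ∧ xl = 0


/-- Extend compatible injections into spaces of equal finite dimension to an isomorphism. -/
theorem extend_iso {K V W X : Type} [Field K]
    [AddCommGroup V] [Module K V] [AddCommGroup W] [Module K W]
    [AddCommGroup X] [Module K X] [FiniteDimensional K V] [FiniteDimensional K W]
    (hVW : Module.finrank K V = Module.finrank K W)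
    (f : X →ₗ[K] V) (g : X →ₗ[K] W)
    (hf : Function.Injective f) (hg : Function.Injective g) :
    ∃ φ : V ≃ₗ[K] W, ∀ x, φ (f x) = g x := by
  obtain ⟨S, hS⟩ := (LinearMap.range f).exists_isCompl
  obtain ⟨T, hT⟩ := (LinearMap.range g).exists_isCompl
  let e1 : X ≃ₗ[K] LinearMap.range f := LinearEquiv.ofInjective f hf
  let e2 : X ≃ₗ[K] LinearMap.range g := LinearEquiv.ofInjective g hg
  have hdim : Module.finrank K S = Module.finrank K T := by
    have h1 := Submodule.finrank_add_eq_of_isCompl hS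
    have h2 := Submodule.finrank_add_eq_of_isCompl hT
    have h3 : Module.finrank K (LinearMap.range f) = Module.finrank K (LinearMap.range g) :=
      (e1.symm.trans e2).finrank_eq
    omega
  obtain ⟨e3⟩ := FiniteDimensional.nonempty_linearEquiv_of_finrank_eq (R := K) (M := ↥S) (M' := ↥T) hdim
  refine ⟨((Submodule.prodEquivOfIsCompl _ _ hS).symm.trans
      ((e1.symm.trans e2).prodCongr e3)).trans (Submodule.prodEquivOfIsCompl _ _ hT), fun x => ?_⟩
  have h4 : (Submodule.prodEquivOfIsCompl _ _ hS).symm (f x) =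
      ((⟨f x, LinearMap.mem_range_self f x⟩ : LinearMap.range f), (0 : S)) := by
    have := Submodule.prodEquivOfIsCompl_symm_apply_left _ _ hS
      (⟨f x, LinearMap.mem_range_self f x⟩ : LinearMap.range f)
    simpa using this
  have h5 : e1.symm (⟨f x, LinearMap.mem_range_self f x⟩ : LinearMap.range f) = x := by
    apply e1.injective
    rw [e1.apply_symm_apply]
    exact Subtype.ext (LinearEquiv.ofInjective_apply f x).symm
  simp only [LinearEquiv.trans_apply, h4, LinearEquiv.prodCongr_apply, LinearEquiv.trans_apply, h5,
    map_zero, Submodule.coe_prodEquivOfIsCompl', Submodule.coe_zero, add_zero]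
  exact LinearEquiv.ofInjective_apply g x

/-- Corollary 6.6 of the paper.
In the setting of the compatible decompositions
`D^B = H^B ⊕ im ∂^B ⊕ L^B` and `D^Λ = H^Λ ⊕ im ∂^Λ ⊕ L^Λ` with
`H^Λ = F(H^B) ⊕ Ĥ` and `L^Λ = F(L^B) ⊕ L̂` (Statement 10), the isomorphism
`i^Λ : Ext*_Λ(Δ,Δ) ≅ H^Λ` can be chosen so that the projections
`p^B : D^B → Ext*_B(𝕃,𝕃)` and `p^Λ : D^Λ → Ext*_Λ(Δ,Δ)` (each being the projection onto
`H` composed with `i⁻¹`) satisfy `F(p^B(f)) = p^Λ(F(f))` for all `f ∈ D^B`, where on the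
left `F` denotes the induced embedding `Ext*_B(𝕃,𝕃) → Ext*_Λ(Δ,Δ)` (called `FX` below). -/
theorem statement11
    (K : Type) [Field K] [IsAlgClosed K] (n : ℕ)
    (B C L : Type) [Ring B] [Algebra K B] [Ring C] [Algebra K C] [Ring L] [Algebra K L]
    (dB : IdemData K n B) (dC : IdemData K n C)
    (hB : dB.Directed) (hC : dC.Codirected)
    (DEx : DualExt K n B C L dB dC)
    (DB DL : Type) [Ring DB] [Algebra K DB] [Ring DL] [Algebra K DL]
    [FiniteDimensional K DB] [FiniteDimensional K DL]
    (EB : DGA K DB) (EL : DGA K DL)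
    (F : DB →ₐ[K] DL) (hFinj : Function.Injective F)
    (hFgr : ∀ (a : ℤ) (x : DB), x ∈ EB.gr a → F x ∈ EL.gr a)
    (hFd : F EB.d = EL.d)
    -- Merkulov data with the compatible decompositions of Statement 10
    (MB : Merkulov K DB EB) (ML : Merkulov K DL EL)
    (Hhat Lhat : ℤ → Submodule K DL)
    (hH : ∀ a, ML.H a = (MB.H a).map F.toLinearMap ⊔ Hhat a)
    (hL : ∀ a, ML.L a = (MB.L a).map F.toLinearMap ⊔ Lhat a)
    -- the `Ext`-algebras as abstract vector spaces, `i^B` and the embedding `FX`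
    (XB XL : Type) [AddCommGroup XB] [Module K XB] [AddCommGroup XL] [Module K XL]
    (iB : XB ≃ₗ[K] ↥(⨆ a, MB.H a))
    (hXL : Nonempty (XL ≃ₗ[K] ↥(⨆ a, ML.H a)))
    (FX : XB →ₗ[K] XL) (hFXinj : Function.Injective FX) :
    ∃ iL : XL ≃ₗ[K] ↥(⨆ a, ML.H a),
      ∀ (f : DB) (hf : MB.p f ∈ ⨆ a, MB.H a) (hg : ML.p (F f) ∈ ⨆ a, ML.H a),
        iL.symm ⟨ML.p (F f), hg⟩ = FX (iB.symm ⟨MB.p f, hf⟩) := by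
  classical
  -- F commutes with the derivations on homogeneous elements
  have hFder : ∀ (a : ℤ) (x : DB), x ∈ EB.gr a → F (EB.der x) = EL.der (F x) := by
    intro a x hx
    rw [EB.der_apply a x hx, EL.der_apply a (F x) (hFgr a x hx)]
    simp only [map_sub, map_mul, map_zsmul, hFd]
  -- ML.p (F x) = F (MB.p x) for homogeneous x
  have key_hom : ∀ (a : ℤ) (x : DB), x ∈ EB.gr a → ML.p (F x) = F (MB.p x) := by
    intro a x hx
    obtain ⟨xh, hxh, y, hy, xl, hxl, hxeq⟩ := MB.decomp a x hx
    have hpB : MB.p x = xh := by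
      rw [hxeq]
      simp only [map_add, MB.p_H a xh hxh, MB.p_bdry y, MB.p_L a xl hxl, add_zero]
    have hFx : F x = F xh + EL.der (F y) + F xl := by
      rw [hxeq]
      simp only [map_add, hFder (a - 1) y (MB.L_le (a - 1) hy)]
    have hFxh : F xh ∈ ML.H a := by
      rw [hH a]
      exact le_sup_left (α := Submodule K DL) (Submodule.mem_map_of_mem hxh)
    have hFxl : F xl ∈ ML.L a := by
      rw [hL a]
      exact le_sup_left (α := Submodule K DL) (Submodule.mem_map_of_mem hxl)
    rw [hFx]
    simp only [map_add, ML.p_H a (F xh) hFxh, ML.p_bdry (F y), ML.p_L a (F xl) hFxl, add_zero,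
      hpB]
  -- ML.p (F x) = F (MB.p x) for all x
  have key : ∀ x : DB, ML.p (F x) = F (MB.p x) := by
    intro x
    have hx : x ∈ ⨆ a, EB.gr a := by
      rw [EB.internal.submodule_iSup_eq_top]; trivial
    refine Submodule.iSup_induction (x := x) EB.gr (motive := fun z => ML.p (F z) = F (MB.p z)) hx
      (fun a z hz => key_hom a z hz) (by simp) ?_
    intro u v hu hv
    show ML.p (F (u + v)) = F (MB.p (u + v))
    simp only [map_add]
    rw [hu, hv]
  -- F maps the span of the H^B into the span of the H^Λ
  have hFH : ∀ h ∈ (⨆ a, MB.H a : Submodule K DB), F h ∈ (⨆ a, ML.H a : Submodule K DL) := by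
    intro h hh
    refine Submodule.iSup_induction (x := h) MB.H
      (motive := fun z => F z ∈ (⨆ a, ML.H a : Submodule K DL)) hh
      (fun a z hz => ?_) (by simp) (fun u v hu hv => ?_)
    · refine Submodule.mem_iSup_of_mem a ?_
      rw [hH a]
      exact le_sup_left (α := Submodule K DL) (Submodule.mem_map_of_mem hz)
    · show F (u + v) ∈ (⨆ a, ML.H a : Submodule K DL)
      rw [map_add]
      exact Submodule.add_mem _ hu hv
  -- the map j : XB → ⨆ ML.H, x ↦ F (iB x)
  let j : XB →ₗ[K] ↥(⨆ a, ML.H a) := LinearMap.codRestrict (⨆ a, ML.H a)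
    ((F.toLinearMap.comp (⨆ a, MB.H a).subtype).comp iB.toLinearMap)
    (fun x => hFH _ (iB x).2)
  have hjinj : Function.Injective j := by
    intro u v huv
    have : F ((iB u : DB)) = F ((iB v : DB)) := congrArg Subtype.val huv
    exact iB.injective (Subtype.ext (hFinj this))
  -- finite dimensionality and dimension count
  obtain ⟨eXL⟩ := hXL
  haveI : FiniteDimensional K XL := Module.Finite.equiv eXL.symm
  have hdim : Module.finrank K XL = Module.finrank K ↥(⨆ a, ML.H a) := eXL.finrank_eq
  obtain ⟨φ, hφ⟩ := extend_iso hdim FX j hFXinj hjinj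
  refine ⟨φ, fun f hf hg => ?_⟩
  have hjx : (⟨ML.p (F f), hg⟩ : ↥(⨆ a, ML.H a)) = j (iB.symm ⟨MB.p f, hf⟩) := by
    apply Subtype.ext
    have h1 : (j (iB.symm ⟨MB.p f, hf⟩) : DL) = F ((iB (iB.symm ⟨MB.p f, hf⟩) : DB)) := rfl
    rw [h1, iB.apply_symm_apply]
    exact key f
  rw [hjx, ← hφ (iB.symm ⟨MB.p f, hf⟩), φ.symm_apply_apply]
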